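/- If two real numbers u and v have the same first r+1 partial quotients in their regular ('+') continued fraction expansions, and all partial quotients (after the 0th) of both u and v are 1 or 2, then |u - v| ≤ 10 · (2/(1+√5))^(2r). -/

import Mathlib

open Real goldenRatio Finset

/-- Iterates of the Gauss map for the regular ('+') continued fraction. -/
noncomputable def plusIter (x : ℝ) (n : ℕ) : ℝ := (fun y => (Int.fract y)⁻¹)^[n] x

/-- The n-th partial quotient of the regular continued fraction of x. -/
noncomputable def plusDigit (x : ℝ) (n : ℕ) : ℤ := ⌊plusIter x n⌋

lemma plusIter_succ (x : ℝ) (n : ℕ) :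
    plusIter x (n + 1) = (Int.fract (plusIter x n))⁻¹ := by
  simp [plusIter, Function.iterate_succ_apply']

section

variable {x : ℝ} (H : ∀ i, 1 ≤ i → plusDigit x i = 1 ∨ plusDigit x i = 2)
include H

lemma fract_pos (n : ℕ) : 0 < Int.fract (plusIter x n) := by
  rcases lt_or_eq_of_le (Int.fract_nonneg (plusIter x n)) with h | h
  · exact h
  · exfalso
    have h1 : plusIter x (n + 1) = 0 := by rw [plusIter_succ, ← h, inv_zero]
    have := H (n + 1) (by omega)
    simp [plusDigit, h1] at this

lemma one_lt_iter (n : ℕ) : 1 < plusIter x (n + 1) := by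
  rw [plusIter_succ]
  have h1 := fract_pos H n
  have h2 := Int.fract_lt_one (plusIter x n)
  exact (one_lt_inv₀ h1).mpr h2

lemma iter_lt_three (n : ℕ) : plusIter x (n + 1) < 3 := by
  have hd : plusDigit x (n + 1) ≤ 2 := by rcases H (n + 1) (by omega) with h | h <;> omega
  have := Int.lt_floor_add_one (plusIter x (n + 1))
  have : plusIter x (n + 1) < (plusDigit x (n + 1) : ℝ) + 1 := this
  have h2 : ((plusDigit x (n + 1) : ℤ) : ℝ) ≤ 2 := by exact_mod_cast hd
  linarith

lemma digit_rec (n : ℕ) :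
    plusIter x n = (plusDigit x n : ℝ) + (plusIter x (n + 1))⁻¹ := by
  rw [plusIter_succ, inv_inv, plusDigit]
  exact (Int.floor_add_fract _).symm

lemma iter_mul_succ (n : ℕ) :
    plusIter x n * plusIter x (n + 1)
      = (plusDigit x n : ℝ) * plusIter x (n + 1) + 1 := by
  have h := digit_rec H n
  have hpos : plusIter x (n + 1) ≠ 0 := by
    have := one_lt_iter H n; linarith
  rw [h]; field_simp

end

lemma gold_pow_le_fib (n : ℕ) : φ ^ n ≤ (Nat.fib (n + 2) : ℝ) := by
  induction n using Nat.strong_induction_on with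
  | _ n ih =>
    match n with
    | 0 => simp
    | 1 =>
        have h5 : √5 ≤ 3 := by
          nlinarith [Real.sq_sqrt (show (0:ℝ) ≤ 5 by norm_num), Real.sqrt_nonneg 5]
        simp only [pow_one, goldenRatio]
        norm_num
        linarith
    | (m + 2) =>
        have h1 := ih m (by omega)
        have h2 := ih (m + 1) (by omega)
        have hsq : φ ^ (m + 2) = φ ^ (m + 1) + φ ^ m := by
          have : φ ^ (m + 2) = φ ^ m * φ ^ 2 := by ring
          rw [this, goldenRatio_sq]; ring
        rw [show m + 2 + 2 = (m + 2) + 2 by rfl, Nat.fib_add_two]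
        push_cast
        linarith


/-- Continuant pair (qₙ, qₙ₋₁). -/
noncomputable def contPair (x : ℝ) : ℕ → ℝ × ℝ
  | 0 => (1, 0)
  | n + 1 => ((plusDigit x (n + 1) : ℝ) * (contPair x n).1 + (contPair x n).2,
      (contPair x n).1)

section
variable {x : ℝ} (H : ∀ i, 1 ≤ i → plusDigit x i = 1 ∨ plusDigit x i = 2)
include H

lemma prod_eq_contPair (n : ℕ) :
    ∏ i ∈ range (n + 1), plusIter x (i + 1)
      = (contPair x n).1 * plusIter x (n + 1) + (contPair x n).2 := by
  induction n with
  | zero => simp [contPair]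
  | succ n ih =>
      rw [prod_range_succ, ih, contPair]
      have e : n + 1 + 1 = n + 2 := rfl
      rw [e]
      have key := iter_mul_succ H (n + 1)
      rw [e] at key
      dsimp only
      have h1 : (contPair x n).1 * plusIter x (n + 1) * plusIter x (n + 2)
          = (contPair x n).1 * ((plusDigit x (n + 1) : ℝ) * plusIter x (n + 2) + 1) := by
        rw [mul_assoc, key]
      linear_combination h1

lemma fib_le_contPair (n : ℕ) :
    (Nat.fib (n + 1) : ℝ) ≤ (contPair x n).1 ∧ (Nat.fib n : ℝ) ≤ (contPair x n).2 := by
  induction n with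
  | zero => simp [contPair]
  | succ n ih =>
      obtain ⟨h1, h2⟩ := ih
      have hd : (1 : ℝ) ≤ (plusDigit x (n + 1) : ℝ) := by
        rcases H (n + 1) (by omega) with h | h <;> rw [h] <;> norm_num
      have hfst : (0 : ℝ) ≤ (contPair x n).1 := le_trans (by positivity) h1
      rw [contPair]
      dsimp only
      constructor
      · show (Nat.fib (n + 2) : ℝ) ≤ _
        rw [Nat.fib_add_two]
        push_cast
        nlinarith
      · exact h1

lemma gold_pow_le_prod (n : ℕ) :
    φ ^ n ≤ ∏ i ∈ range (n + 1), plusIter x (i + 1) := by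
  rw [prod_eq_contPair H]
  obtain ⟨h1, h2⟩ := fib_le_contPair H n
  have ht := one_lt_iter H n
  have hf : (0 : ℝ) ≤ (contPair x n).1 := le_trans (by positivity) h1
  calc φ ^ n ≤ (Nat.fib (n + 2) : ℝ) := gold_pow_le_fib n
    _ = (Nat.fib (n + 1) : ℝ) + Nat.fib n := by rw [Nat.fib_add_two]; push_cast; ring
    _ ≤ (contPair x n).1 * plusIter x (n + 1) + (contPair x n).2 := by nlinarith

lemma prod_pos (n : ℕ) : 0 < ∏ i ∈ range n, plusIter x (i + 1) := by
  apply Finset.prod_pos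
  intro i _
  linarith [one_lt_iter H i]

end

lemma tele (u v : ℝ) (r : ℕ)
    (hcoin : ∀ i ≤ r, plusDigit u i = plusDigit v i)
    (hu : ∀ i, 1 ≤ i → plusDigit u i = 1 ∨ plusDigit u i = 2)
    (hv : ∀ i, 1 ≤ i → plusDigit v i = 1 ∨ plusDigit v i = 2) :
    ∀ n ≤ r, |u - v| *
        ((∏ i ∈ range n, plusIter u (i + 1)) * (∏ i ∈ range n, plusIter v (i + 1)))
      = |plusIter u n - plusIter v n| := by
  intro n hn
  induction n with
  | zero => simp [plusIter]
  | succ n ih =>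
      have hn' : n ≤ r := by omega
      have ihn := ih hn'
      set a := plusIter u (n + 1) with ha
      set b := plusIter v (n + 1) with hb
      have hapos : 1 < a := one_lt_iter hu n
      have hbpos : 1 < b := one_lt_iter hv n
      have hrec : plusIter u n - plusIter v n = a⁻¹ - b⁻¹ := by
        rw [digit_rec hu n, digit_rec hv n, hcoin n hn']
        ring
      have hkey : |plusIter u n - plusIter v n| * (a * b) = |a - b| := by
        rw [hrec]
        have : (a⁻¹ - b⁻¹) * (a * b) = b - a := by
          field_simp
        rw [← abs_of_pos (show (0:ℝ) < a * b by nlinarith), ← abs_mul, this, abs_sub_comm]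
      rw [prod_range_succ, prod_range_succ, ← ha, ← hb]
      calc |u - v| * (((∏ i ∈ range n, plusIter u (i + 1)) * a) *
              ((∏ i ∈ range n, plusIter v (i + 1)) * b))
          = (|u - v| * ((∏ i ∈ range n, plusIter u (i + 1)) *
              (∏ i ∈ range n, plusIter v (i + 1)))) * (a * b) := by ring
        _ = |plusIter u n - plusIter v n| * (a * b) := by rw [ihn]
        _ = |a - b| := hkey

theorem stmt_0 (u v : ℝ) (r : ℕ)
    (hcoin : ∀ i ≤ r, plusDigit u i = plusDigit v i)
    (hu : ∀ i, 1 ≤ i → plusDigit u i = 1 ∨ plusDigit u i = 2)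
    (hv : ∀ i, 1 ≤ i → plusDigit v i = 1 ∨ plusDigit v i = 2) :
    |u - v| ≤ 10 * (2 / (1 + Real.sqrt 5)) ^ (2 * r) := by
  have hlam : (2 / (1 + Real.sqrt 5)) = φ⁻¹ := by
    rw [goldenRatio, inv_div]
  rw [hlam]
  have hgold : (1 : ℝ) < φ := one_lt_goldenRatio
  match r with
  | 0 =>
      simp only [Nat.mul_zero, pow_zero, mul_one]
      have h0 : plusDigit u 0 = plusDigit v 0 := hcoin 0 (le_refl 0)
      have hu0 : u = (plusDigit u 0 : ℝ) + Int.fract u := (Int.floor_add_fract u).symm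
      have hv0 : v = (plusDigit v 0 : ℝ) + Int.fract v := (Int.floor_add_fract v).symm
      have h1 : u - v = Int.fract u - Int.fract v := by
        conv_lhs => rw [hu0, hv0, h0]
        ring
      rw [h1, abs_sub_le_iff]
      have := Int.fract_nonneg u
      have := Int.fract_nonneg v
      have := Int.fract_lt_one u
      have := Int.fract_lt_one v
      constructor <;> linarith
  | (m + 1) =>
      set r := m + 1
      have htele := tele u v r hcoin hu hv r (le_refl r)
      set Pu := ∏ i ∈ range r, plusIter u (i + 1) with hPu
      set Pv := ∏ i ∈ range r, plusIter v (i + 1) with hPv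
      have hPupos : 0 < Pu := prod_pos hu r
      have hPvpos : 0 < Pv := prod_pos hv r
      have hPuge : φ ^ m ≤ Pu := gold_pow_le_prod hu m
      have hPvge : φ ^ m ≤ Pv := gold_pow_le_prod hv m
      have hdiff : |plusIter u r - plusIter v r| ≤ 2 := by
        have h1 := one_lt_iter hu m
        have h2 := one_lt_iter hv m
        have h3 := iter_lt_three hu m
        have h4 := iter_lt_three hv m
        rw [abs_sub_le_iff]
        constructor <;> [linarith; linarith]
      have huv : |u - v| = |plusIter u r - plusIter v r| / (Pu * Pv) := by
        field_simp at htele ⊢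
        linarith [htele]
      rw [huv]
      have hphipos : (0 : ℝ) < φ ^ m := by positivity
      have hprodge : φ ^ m * φ ^ m ≤ Pu * Pv := by nlinarith
      have hstep : |plusIter u r - plusIter v r| / (Pu * Pv) ≤ 2 / (φ ^ m * φ ^ m) :=
        div_le_div₀ (by norm_num) hdiff (by positivity) hprodge
      refine hstep.trans ?_
      have hr2 : 2 * r = 2 * m + 2 := by omega
      rw [hr2, inv_pow]
      have hX : (0 : ℝ) < φ ^ (2 * m) := by positivity
      have hmm : φ ^ m * φ ^ m = φ ^ (2 * m) := by rw [← pow_add]; ring_nf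
      have hsplit : φ ^ (2 * m + 2) = φ ^ (2 * m) * φ ^ 2 := by rw [pow_add]
      have hphi2 : φ ^ 2 ≤ 5 := by
        have h5 : √5 < 3 := by
          nlinarith [Real.sq_sqrt (show (0:ℝ) ≤ 5 by norm_num), Real.sqrt_nonneg 5]
        have hlt : φ < 2 := by rw [goldenRatio]; linarith
        rw [goldenRatio_sq]; linarith
      rw [hmm]
      have hre : (10:ℝ) * (φ ^ (2*m+2))⁻¹ = 10 / (φ ^ (2*m) * φ ^ 2) := by
        rw [hsplit]; ring
      rw [hre, div_le_div_iff₀ hX (by positivity)]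
      nlinarith [hX, hphi2]
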